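/- There exists a positive absolute constant c₀ such that the following holds. Let X̃ ∈ ℝ^{n₁×r} and Ỹ ∈ ℝ^{n₂×r}, set Ẽ_x = X̃ − X⋆ and Ẽ_y = Ỹ − Y⋆, and assume ‖Ẽ_x‖_F² + ‖Ẽ_y‖_F² ≤ c₀² σ_min/κ³. Let Λ ∈ ℝ^{r×r} be invertible with ‖Λ‖ ≤ 2 and ‖Λ⁻¹‖ ≤ 2. Then ‖(X̃Ỹᵀ − M⋆)ỸΛ‖_F² + ‖(X̃Ỹᵀ − M⋆)ᵀX̃Λ⁻¹‖_F² ≤ 54σ_max·(‖Ẽ_x Ỹᵀ‖_F² + ‖X̃ Ẽ_yᵀ‖_F²) + 27c₀²·(σ_max σ_min/κ³)·(‖Ẽ_x‖_F² + ‖Ẽ_y‖_F²). -/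

import Mathlib

open Matrix BigOperators

/-- Frobenius norm of a real matrix. -/
noncomputable def frobNorm {m n : ℕ} (A : Matrix (Fin m) (Fin n) ℝ) : ℝ :=
  Real.sqrt (∑ i, ∑ j, (A i j) ^ 2)

/-- Spectral norm (largest singular value) of a real matrix. -/
noncomputable def specNorm {m n : ℕ} (A : Matrix (Fin m) (Fin n) ℝ) : ℝ :=
  ‖LinearMap.toContinuousLinearMap (Matrix.toEuclideanLin A)‖

/-- Smallest singular value of a matrix with `r` columns (the `r`-th largest singular value). -/
noncomputable def sigmaMinCol {m r : ℕ} (A : Matrix (Fin m) (Fin r) ℝ) : ℝ :=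
  sInf { s | ∃ v : EuclideanSpace ℝ (Fin r), ‖v‖ = 1 ∧ s = ‖Matrix.toEuclideanLin A v‖ }

/-- Matrix inner product `⟨A, B⟩ = Tr(Bᵀ A)`. -/
noncomputable def matInner {m n : ℕ} (A B : Matrix (Fin m) (Fin n) ℝ) : ℝ :=
  Matrix.trace (Bᵀ * A)

/-- Euclidean norm on `ℝ^m`. -/
noncomputable def vec2Norm {m : ℕ} (y : Fin m → ℝ) : ℝ :=
  Real.sqrt (∑ i, (y i) ^ 2)

/-- The sensing operator `𝒜(M) = (⟨A_i, M⟩)_{i=1..m}`. -/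
noncomputable def senseOp {n₁ n₂ m : ℕ} (As : Fin m → Matrix (Fin n₁) (Fin n₂) ℝ)
    (M : Matrix (Fin n₁) (Fin n₂) ℝ) : Fin m → ℝ :=
  fun i => matInner (As i) M

/-- The adjoint operator `𝒜*(y) = ∑ i, y i • A i`. -/
noncomputable def senseAdj {n₁ n₂ m : ℕ} (As : Fin m → Matrix (Fin n₁) (Fin n₂) ℝ)
    (y : Fin m → ℝ) : Matrix (Fin n₁) (Fin n₂) ℝ :=
  ∑ i, y i • As i

/-- Rank-`k` restricted isometry property with constant `δ`. -/
def HasRIP {n₁ n₂ m : ℕ} (As : Fin m → Matrix (Fin n₁) (Fin n₂) ℝ) (k : ℕ) (δ : ℝ) : Prop :=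
  0 ≤ δ ∧ δ < 1 ∧
  ∀ M : Matrix (Fin n₁) (Fin n₂) ℝ, M.rank ≤ k →
    (1 - δ) * (frobNorm M) ^ 2 ≤ (vec2Norm (senseOp As M)) ^ 2 ∧
    (vec2Norm (senseOp As M)) ^ 2 ≤ (1 + δ) * (frobNorm M) ^ 2

/-- dist(Z, Z⋆): infimum over invertible `P` of
`sqrt(‖XP − X⋆‖_F² + ‖YP⁻ᵀ − Y⋆‖_F²)`. -/
noncomputable def distZ {n₁ n₂ r : ℕ} (X Xs : Matrix (Fin n₁) (Fin r) ℝ)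
    (Y Ys : Matrix (Fin n₂) (Fin r) ℝ) : ℝ :=
  sInf { v | ∃ P : Matrix (Fin r) (Fin r) ℝ, IsUnit P ∧
    v = Real.sqrt ((frobNorm (X * P - Xs)) ^ 2 + (frobNorm (Y * (P⁻¹)ᵀ - Ys)) ^ 2) }


section Helpers

open Matrix

lemma frob_nonneg {m n : ℕ} (A : Matrix (Fin m) (Fin n) ℝ) : 0 ≤ frobNorm A :=
  Real.sqrt_nonneg _

lemma frob_sq {m n : ℕ} (A : Matrix (Fin m) (Fin n) ℝ) :
    frobNorm A ^ 2 = ∑ i, ∑ j, (A i j) ^ 2 :=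
  Real.sq_sqrt (Finset.sum_nonneg fun _ _ => Finset.sum_nonneg fun _ _ => sq_nonneg _)

lemma frob_transpose {m n : ℕ} (A : Matrix (Fin m) (Fin n) ℝ) : frobNorm Aᵀ = frobNorm A := by
  unfold frobNorm
  rw [Finset.sum_comm]
  rfl

lemma spec_nonneg {m n : ℕ} (A : Matrix (Fin m) (Fin n) ℝ) : 0 ≤ specNorm A :=
  norm_nonneg _

open scoped Matrix.Norms.L2Operator in
lemma specNorm_eq_l2 {m n : ℕ} (A : Matrix (Fin m) (Fin n) ℝ) : specNorm A = ‖A‖ := rfl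

lemma spec_transpose {m n : ℕ} (A : Matrix (Fin m) (Fin n) ℝ) : specNorm Aᵀ = specNorm A := by
  rw [specNorm_eq_l2, specNorm_eq_l2, ← Matrix.conjTranspose_eq_transpose_of_trivial]
  exact Matrix.l2_opNorm_conjTranspose A

lemma spec_add_le {m n : ℕ} (A B : Matrix (Fin m) (Fin n) ℝ) :
    specNorm (A + B) ≤ specNorm A + specNorm B := by
  unfold specNorm
  rw [map_add, map_add]
  exact norm_add_le _ _

lemma euc_norm_sq {k : ℕ} (x : EuclideanSpace ℝ (Fin k)) : ‖x‖ ^ 2 = ∑ i, x i ^ 2 := by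
  rw [EuclideanSpace.norm_eq, Real.sq_sqrt (Finset.sum_nonneg fun _ _ => sq_nonneg _)]
  simp [sq_abs]

lemma spec_apply_le {m n : ℕ} (A : Matrix (Fin m) (Fin n) ℝ) (v : EuclideanSpace ℝ (Fin n)) :
    ‖Matrix.toEuclideanLin A v‖ ≤ specNorm A * ‖v‖ :=
  (LinearMap.toContinuousLinearMap (Matrix.toEuclideanLin A)).le_opNorm v

lemma toEuc_col {m n p : ℕ} (A : Matrix (Fin m) (Fin n) ℝ) (B : Matrix (Fin n) (Fin p) ℝ)
    (j : Fin p) (i : Fin m) :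
    (Matrix.toEuclideanLin A ((WithLp.equiv 2 (Fin n → ℝ)).symm (fun k => B k j))) i
      = (A * B) i j := by
  rw [Matrix.toEuclideanLin_apply]
  simp [Matrix.mulVec, Matrix.mul_apply, dotProduct]

lemma frob_mul_le_spec_frob {m n p : ℕ} (A : Matrix (Fin m) (Fin n) ℝ)
    (B : Matrix (Fin n) (Fin p) ℝ) :
    frobNorm (A * B) ≤ specNorm A * frobNorm B := by
  have h2 : frobNorm (A * B) ^ 2 ≤ (specNorm A * frobNorm B) ^ 2 := by
    rw [frob_sq, Finset.sum_comm]
    have key : ∀ j : Fin p, (∑ i, ((A * B) i j) ^ 2) ≤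
        specNorm A ^ 2 * ∑ k, (B k j) ^ 2 := by
      intro j
      set v : EuclideanSpace ℝ (Fin n) := (WithLp.equiv 2 (Fin n → ℝ)).symm (fun k => B k j)
      have h1 : ‖Matrix.toEuclideanLin A v‖ ≤ specNorm A * ‖v‖ := spec_apply_le A v
      have h2 : ‖Matrix.toEuclideanLin A v‖ ^ 2 ≤ (specNorm A * ‖v‖) ^ 2 := by
        apply pow_le_pow_left₀ (norm_nonneg _) h1
      rw [euc_norm_sq] at h2
      have hv : ‖v‖ ^ 2 = ∑ k, (B k j) ^ 2 := by
        rw [euc_norm_sq]; rfl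
      calc (∑ i, ((A * B) i j) ^ 2) = ∑ i, ((Matrix.toEuclideanLin A v) i) ^ 2 := by
            refine Finset.sum_congr rfl fun i _ => ?_
            rw [toEuc_col]
        _ ≤ (specNorm A * ‖v‖) ^ 2 := h2
        _ = specNorm A ^ 2 * ∑ k, (B k j) ^ 2 := by rw [mul_pow, hv]
    calc (∑ j, ∑ i, ((A * B) i j) ^ 2) ≤ ∑ j, specNorm A ^ 2 * ∑ k, (B k j) ^ 2 :=
          Finset.sum_le_sum fun j _ => key j
      _ = specNorm A ^ 2 * ∑ j, ∑ k, (B k j) ^ 2 := by rw [Finset.mul_sum]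
      _ = (specNorm A * frobNorm B) ^ 2 := by
          rw [mul_pow, frob_sq, Finset.sum_comm]
  have h3 := Real.sqrt_le_sqrt h2
  rwa [Real.sqrt_sq (frob_nonneg _),
    Real.sqrt_sq (mul_nonneg (spec_nonneg _) (frob_nonneg _))] at h3

lemma frob_mul_le_frob_spec {m n p : ℕ} (A : Matrix (Fin m) (Fin n) ℝ)
    (B : Matrix (Fin n) (Fin p) ℝ) :
    frobNorm (A * B) ≤ frobNorm A * specNorm B := by
  calc frobNorm (A * B) = frobNorm ((A * B)ᵀ) := (frob_transpose _).symm
    _ = frobNorm (Bᵀ * Aᵀ) := by rw [Matrix.transpose_mul]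
    _ ≤ specNorm Bᵀ * frobNorm Aᵀ := frob_mul_le_spec_frob _ _
    _ = frobNorm A * specNorm B := by rw [spec_transpose, frob_transpose]; ring

lemma spec_le_frob {m n : ℕ} (A : Matrix (Fin m) (Fin n) ℝ) : specNorm A ≤ frobNorm A := by
  apply ContinuousLinearMap.opNorm_le_bound _ (frob_nonneg A)
  intro v
  have hv : 0 ≤ ‖v‖ := norm_nonneg v
  have h2 : ‖Matrix.toEuclideanLin A v‖ ^ 2 ≤ (frobNorm A * ‖v‖) ^ 2 := by
    rw [euc_norm_sq, mul_pow, frob_sq, euc_norm_sq, Finset.sum_mul]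
    apply Finset.sum_le_sum
    intro i _
    have : (Matrix.toEuclideanLin A v) i = ∑ j, A i j * v j := by
      rw [Matrix.toEuclideanLin_apply]
      simp [Matrix.mulVec, dotProduct]
    rw [this]
    exact Finset.sum_mul_sq_le_sq_mul_sq _ _ _
  have h3 := Real.sqrt_le_sqrt h2
  rwa [Real.sqrt_sq (norm_nonneg _), Real.sqrt_sq (mul_nonneg (frob_nonneg _) hv)] at h3

noncomputable def matVec {m n : ℕ} (A : Matrix (Fin m) (Fin n) ℝ) :
    EuclideanSpace ℝ (Fin m × Fin n) := (WithLp.equiv 2 _).symm (fun p => A p.1 p.2)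

lemma frob_eq_norm {m n : ℕ} (A : Matrix (Fin m) (Fin n) ℝ) : frobNorm A = ‖matVec A‖ := by
  rw [EuclideanSpace.norm_eq]
  unfold frobNorm
  congr 1
  rw [Fintype.sum_prod_type]
  refine Finset.sum_congr rfl fun i _ => Finset.sum_congr rfl fun j _ => ?_
  rw [Real.norm_eq_abs, sq_abs]
  rfl

lemma frob_add_le {m n : ℕ} (A B : Matrix (Fin m) (Fin n) ℝ) :
    frobNorm (A + B) ≤ frobNorm A + frobNorm B := by
  rw [frob_eq_norm, frob_eq_norm, frob_eq_norm]
  have : matVec (A + B) = matVec A + matVec B := rfl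
  rw [this]
  exact norm_add_le _ _

lemma frob_neg {m n : ℕ} (A : Matrix (Fin m) (Fin n) ℝ) : frobNorm (-A) = frobNorm A := by
  unfold frobNorm; simp

lemma spec_le_sqrt_of_gram {m r : ℕ} (A : Matrix (Fin m) (Fin r) ℝ) (d : Fin r → ℝ) (c : ℝ)
    (hc : 0 ≤ c) (h : Aᵀ * A = Matrix.diagonal d) (hd : ∀ i, d i ≤ c) :
    specNorm A ≤ Real.sqrt c := by
  apply ContinuousLinearMap.opNorm_le_bound _ (Real.sqrt_nonneg c)
  intro v
  have key : ‖Matrix.toEuclideanLin A v‖ ^ 2 ≤ c * ‖v‖ ^ 2 := by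
    rw [euc_norm_sq, euc_norm_sq]
    set u : Fin r → ℝ := WithLp.equiv 2 (Fin r → ℝ) v with hu
    have happ : ∀ i, (Matrix.toEuclideanLin A v) i = (A *ᵥ u) i := fun i => rfl
    have hvu : ∀ j, v j = u j := fun j => rfl
    calc (∑ i, (Matrix.toEuclideanLin A v) i ^ 2) = ∑ i, (A *ᵥ u) i * (A *ᵥ u) i := by
          refine Finset.sum_congr rfl fun i _ => ?_; rw [happ, sq]
      _ = (A *ᵥ u) ⬝ᵥ (A *ᵥ u) := rfl
      _ = u ⬝ᵥ ((Aᵀ * A) *ᵥ u) := by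
          rw [← Matrix.mulVec_mulVec, Matrix.dotProduct_mulVec u, Matrix.vecMul_transpose]
      _ = ∑ j, u j * (d j * u j) := by
          rw [h]; simp [dotProduct, Matrix.mulVec_diagonal]
      _ ≤ ∑ j, c * (u j * u j) := by
          refine Finset.sum_le_sum fun j _ => ?_
          have h1 : u j * (d j * u j) = d j * (u j * u j) := by ring
          rw [h1]
          exact mul_le_mul_of_nonneg_right (hd j) (mul_self_nonneg _)
      _ = c * ∑ j, v j ^ 2 := by
          rw [Finset.mul_sum]; exact Finset.sum_congr rfl fun j _ => by rw [hvu, sq]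
  have h3 := Real.sqrt_le_sqrt key
  rwa [Real.sqrt_sq (norm_nonneg _), Real.sqrt_mul hc, Real.sqrt_sq (norm_nonneg _)] at h3

lemma gram_diag {n₁ r : ℕ} (U : Matrix (Fin n₁) (Fin r) ℝ) (d : Fin r → ℝ) (hd : ∀ i, 0 < d i)
    (hU : Uᵀ * U = 1) :
    (U * Matrix.diagonal (fun i => Real.sqrt (d i)))ᵀ *
      (U * Matrix.diagonal (fun i => Real.sqrt (d i))) = Matrix.diagonal d := by
  set D := Matrix.diagonal (fun i => Real.sqrt (d i))
  have hDt : Dᵀ = D := Matrix.diagonal_transpose _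
  calc (U * D)ᵀ * (U * D) = Dᵀ * Uᵀ * (U * D) := by rw [Matrix.transpose_mul]
    _ = Dᵀ * (Uᵀ * U * D) := by rw [Matrix.mul_assoc, Matrix.mul_assoc]
    _ = D * D := by rw [hU, Matrix.one_mul, hDt]
    _ = Matrix.diagonal d := by
        rw [Matrix.diagonal_mul_diagonal,
          show (fun i => Real.sqrt (d i) * Real.sqrt (d i)) = d from
            funext fun i => Real.mul_self_sqrt (hd i).le]

lemma factor_eq {n₁ n₂ r : ℕ} (U : Matrix (Fin n₁) (Fin r) ℝ) (V : Matrix (Fin n₂) (Fin r) ℝ)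
    (d : Fin r → ℝ) (hd : ∀ i, 0 < d i) :
    (U * Matrix.diagonal (fun i => Real.sqrt (d i))) *
      (V * Matrix.diagonal (fun i => Real.sqrt (d i)))ᵀ = U * Matrix.diagonal d * Vᵀ := by
  set D := Matrix.diagonal (fun i => Real.sqrt (d i))
  have hDt : Dᵀ = D := Matrix.diagonal_transpose _
  have hDD : D * D = Matrix.diagonal d := by
    rw [Matrix.diagonal_mul_diagonal,
      show (fun i => Real.sqrt (d i) * Real.sqrt (d i)) = d from
        funext fun i => Real.mul_self_sqrt (hd i).le]
  calc U * D * (V * D)ᵀ = U * D * (Dᵀ * Vᵀ) := by rw [Matrix.transpose_mul]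
    _ = U * (D * D) * Vᵀ := by rw [hDt, Matrix.mul_assoc, Matrix.mul_assoc, Matrix.mul_assoc]
    _ = U * Matrix.diagonal d * Vᵀ := by rw [hDD]

lemma error_decomp {n₁ n₂ r : ℕ} (Xt Xs : Matrix (Fin n₁) (Fin r) ℝ)
    (Yt Ys : Matrix (Fin n₂) (Fin r) ℝ) :
    Xt * Ytᵀ - Xs * Ysᵀ =
      (Xt - Xs) * Ytᵀ + Xt * (Yt - Ys)ᵀ + -((Xt - Xs) * (Yt - Ys)ᵀ) := by
  rw [Matrix.transpose_sub]
  rw [Matrix.sub_mul, Matrix.sub_mul, Matrix.mul_sub, Matrix.mul_sub]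
  abel

end Helpers


set_option maxHeartbeats 1000000 in
lemma numeric_main (σmax q s a b F T1 T2 L1 L2 : ℝ)
    (hσ : 0 < σmax) (hq0 : 0 ≤ q) (hqσ : q ≤ σmax) (hs2 : s ^ 2 = σmax) (hs0 : 0 ≤ s)
    (ha0 : 0 ≤ a) (hb0 : 0 ≤ b) (hF0 : 0 ≤ F) (hT10 : 0 ≤ T1) (hT20 : 0 ≤ T2)
    (hL10 : 0 ≤ L1) (hL20 : 0 ≤ L2)
    (hq : a ^ 2 + b ^ 2 ≤ q / 4)
    (hF : F ≤ T1 + T2 + a * b)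
    (hL1 : L1 ≤ 2 * (F * (s + b))) (hL2 : L2 ≤ 2 * (F * (s + a))) :
    L1 ^ 2 + L2 ^ 2 ≤ 54 * σmax * (T1 ^ 2 + T2 ^ 2)
      + 27 * (1/2) ^ 2 * (σmax * q) * (a ^ 2 + b ^ 2) := by
  have ha : a ≤ s / 2 := by nlinarith [hq, hqσ, hs2, sq_nonneg b]
  have hb : b ≤ s / 2 := by nlinarith [hq, hqσ, hs2, sq_nonneg a]
  -- squared versions of the main bounds
  have hL1sq : L1 ^ 2 ≤ 4 * (F ^ 2 * (s + b) ^ 2) := by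
    calc L1 ^ 2 ≤ (2 * (F * (s + b))) ^ 2 := pow_le_pow_left₀ hL10 hL1 2
      _ = 4 * (F ^ 2 * (s + b) ^ 2) := by ring
  have hL2sq : L2 ^ 2 ≤ 4 * (F ^ 2 * (s + a) ^ 2) := by
    calc L2 ^ 2 ≤ (2 * (F * (s + a))) ^ 2 := pow_le_pow_left₀ hL20 hL2 2
      _ = 4 * (F ^ 2 * (s + a) ^ 2) := by ring
  have hsb2 : (s + b) ^ 2 ≤ (9/4) * σmax := by nlinarith [hb, hb0, hs0, hs2]
  have hsa2 : (s + a) ^ 2 ≤ (9/4) * σmax := by nlinarith [ha, ha0, hs0, hs2]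
  have hF20 : (0:ℝ) ≤ F ^ 2 := sq_nonneg F
  have h18 : L1 ^ 2 + L2 ^ 2 ≤ 18 * σmax * F ^ 2 := by
    have t1 := mul_le_mul_of_nonneg_left hsb2 hF20
    have t2 := mul_le_mul_of_nonneg_left hsa2 hF20
    linarith
  have hFsq : F ^ 2 ≤ 3 * (T1 ^ 2 + T2 ^ 2 + (a * b) ^ 2) := by
    have hab0 : 0 ≤ a * b := mul_nonneg ha0 hb0
    have h1 : F ^ 2 ≤ (T1 + T2 + a * b) ^ 2 := pow_le_pow_left₀ hF0 hF 2
    nlinarith [sq_nonneg (T1 - T2), sq_nonneg (T1 - a * b), sq_nonneg (T2 - a * b)]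
  have hab2 : (a * b) ^ 2 ≤ q * (a ^ 2 + b ^ 2) / 16 := by
    nlinarith [sq_nonneg (a ^ 2 - b ^ 2),
      mul_le_mul_of_nonneg_left hq (by positivity : (0:ℝ) ≤ a ^ 2 + b ^ 2)]
  have t3 := mul_le_mul_of_nonneg_left hFsq (by positivity : (0:ℝ) ≤ 18 * σmax)
  have t4 := mul_le_mul_of_nonneg_left hab2 (by positivity : (0:ℝ) ≤ 54 * σmax)
  nlinarith [h18, t3, t4, mul_nonneg hq0 (by positivity : (0:ℝ) ≤ a ^ 2 + b ^ 2),
    mul_nonneg hσ.le (mul_nonneg hq0 (by positivity : (0:ℝ) ≤ a ^ 2 + b ^ 2))]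

/-- upper bound on `β₁ + β₂`: there is an absolute constant
`c₀ > 0` such that if the error satisfies `‖Ẽ_x‖_F² + ‖Ẽ_y‖_F² ≤ c₀²σ_min/κ³` and
`Λ` is invertible with `‖Λ‖ ≤ 2` and `‖Λ⁻¹‖ ≤ 2`, then
`‖(X̃Ỹᵀ−M⋆)ỸΛ‖_F² + ‖(X̃Ỹᵀ−M⋆)ᵀX̃Λ⁻¹‖_F² ≤ 54σ_max(‖Ẽ_xỸᵀ‖_F² + ‖X̃Ẽ_yᵀ‖_F²) + 27c₀²(σ_maxσ_min/κ³)(‖Ẽ_x‖_F² + ‖Ẽ_y‖_F²)`. -/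
theorem beta_upper_bound :
    ∃ c₀ : ℝ, 0 < c₀ ∧
      ∀ (n₁ n₂ r : ℕ)
        (Ustar : Matrix (Fin n₁) (Fin r) ℝ) (Vstar : Matrix (Fin n₂) (Fin r) ℝ)
        (d : Fin r → ℝ), (∀ i, 0 < d i) →
        Ustarᵀ * Ustar = 1 → Vstarᵀ * Vstar = 1 →
        ∀ (Mstar : Matrix (Fin n₁) (Fin n₂) ℝ),
          Mstar = Ustar * Matrix.diagonal d * Vstarᵀ →
        ∀ (Xstar : Matrix (Fin n₁) (Fin r) ℝ) (Ystar : Matrix (Fin n₂) (Fin r) ℝ),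
          Xstar = Ustar * Matrix.diagonal (fun i => Real.sqrt (d i)) →
          Ystar = Vstar * Matrix.diagonal (fun i => Real.sqrt (d i)) →
        ∀ (σmax σmin : ℝ),
          IsGreatest (Set.range d) σmax → IsLeast (Set.range d) σmin →
        ∀ (Xt : Matrix (Fin n₁) (Fin r) ℝ) (Yt : Matrix (Fin n₂) (Fin r) ℝ),
          (frobNorm (Xt - Xstar)) ^ 2 + (frobNorm (Yt - Ystar)) ^ 2 ≤
            c₀ ^ 2 * σmin / (σmax / σmin) ^ 3 →
        ∀ (Λ : Matrix (Fin r) (Fin r) ℝ), IsUnit Λ →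
          specNorm Λ ≤ 2 → specNorm Λ⁻¹ ≤ 2 →
          (frobNorm ((Xt * Ytᵀ - Mstar) * (Yt * Λ))) ^ 2 +
              (frobNorm ((Xt * Ytᵀ - Mstar)ᵀ * (Xt * Λ⁻¹))) ^ 2 ≤
            54 * σmax * ((frobNorm ((Xt - Xstar) * Ytᵀ)) ^ 2 +
                (frobNorm (Xt * (Yt - Ystar)ᵀ)) ^ 2) +
              27 * c₀ ^ 2 * (σmax * σmin / (σmax / σmin) ^ 3) *
                ((frobNorm (Xt - Xstar)) ^ 2 + (frobNorm (Yt - Ystar)) ^ 2) := by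
  refine ⟨1/2, by norm_num, ?_⟩
  intro n₁ n₂ r Ustar Vstar d hd hU hV Mstar hM Xstar Ystar hX hY σmax σmin hmax hmin
    Xt Yt herr Λ hΛ hΛ2 hΛi2
  -- basic singular value facts
  have hσmin_pos : 0 < σmin := by
    obtain ⟨i0, hi0⟩ := hmin.1
    rw [← hi0]; exact hd i0
  have hσle : σmin ≤ σmax := hmin.2 hmax.1
  have hσmax_pos : 0 < σmax := lt_of_lt_of_le hσmin_pos hσle
  have hdle : ∀ i, d i ≤ σmax := fun i => hmax.2 ⟨i, rfl⟩
  set s := Real.sqrt σmax with hs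
  have hs2 : s ^ 2 = σmax := Real.sq_sqrt hσmax_pos.le
  have hs0 : 0 ≤ s := Real.sqrt_nonneg _
  -- gram matrices and spectral bounds for the ground truth factors
  have hXg : Xstarᵀ * Xstar = Matrix.diagonal d := by rw [hX]; exact gram_diag Ustar d hd hU
  have hYg : Ystarᵀ * Ystar = Matrix.diagonal d := by rw [hY]; exact gram_diag Vstar d hd hV
  have specXs : specNorm Xstar ≤ s := spec_le_sqrt_of_gram _ d σmax hσmax_pos.le hXg hdle
  have specYs : specNorm Ystar ≤ s := spec_le_sqrt_of_gram _ d σmax hσmax_pos.le hYg hdle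
  have hMs : Mstar = Xstar * Ystarᵀ := by rw [hM, hX, hY, factor_eq Ustar Vstar d hd]
  set Ex := Xt - Xstar with hEx
  set Ey := Yt - Ystar with hEy
  set a := frobNorm Ex with ha_def
  set b := frobNorm Ey with hb_def
  have ha0 : 0 ≤ a := frob_nonneg _
  have hb0 : 0 ≤ b := frob_nonneg _
  -- spectral bounds for the current factors
  have specXt : specNorm Xt ≤ s + a := by
    have hXtd : Xt = Xstar + Ex := by rw [hEx]; abel
    calc specNorm Xt = specNorm (Xstar + Ex) := by rw [← hXtd]
      _ ≤ specNorm Xstar + specNorm Ex := spec_add_le _ _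
      _ ≤ s + a := add_le_add specXs (spec_le_frob _)
  have specYt : specNorm Yt ≤ s + b := by
    have hYtd : Yt = Ystar + Ey := by rw [hEy]; abel
    calc specNorm Yt = specNorm (Ystar + Ey) := by rw [← hYtd]
      _ ≤ specNorm Ystar + specNorm Ey := spec_add_le _ _
      _ ≤ s + b := add_le_add specYs (spec_le_frob _)
  -- the condition number quantities
  set K := (σmax / σmin) ^ 3 with hKdef
  have hK1 : (1 : ℝ) ≤ K := one_le_pow₀ ((one_le_div hσmin_pos).2 hσle)
  have hK0 : (0 : ℝ) < K := lt_of_lt_of_le one_pos hK1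
  set q := σmin / K with hq_def
  have hq0 : 0 ≤ q := div_nonneg hσmin_pos.le hK0.le
  have hqσ : q ≤ σmax := le_trans (div_le_self hσmin_pos.le hK1) hσle
  have hq : a ^ 2 + b ^ 2 ≤ q / 4 := by
    have h1 : ((1:ℝ)/2) ^ 2 * σmin / K = q / 4 := by
      rw [hq_def]; ring
    calc a ^ 2 + b ^ 2 ≤ (1/2) ^ 2 * σmin / K := herr
      _ = q / 4 := h1
  -- error matrix decomposition
  set E := Xt * Ytᵀ - Mstar with hE_def
  have hE : E = Ex * Ytᵀ + Xt * Eyᵀ + -(Ex * Eyᵀ) := by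
    rw [hE_def, hMs, hEx, hEy]; exact error_decomp Xt Xstar Yt Ystar
  set F := frobNorm E with hF_def
  set T1 := frobNorm (Ex * Ytᵀ) with hT1_def
  set T2 := frobNorm (Xt * Eyᵀ) with hT2_def
  have hF0 : 0 ≤ F := frob_nonneg _
  have hT10 : 0 ≤ T1 := frob_nonneg _
  have hT20 : 0 ≤ T2 := frob_nonneg _
  have hF : F ≤ T1 + T2 + a * b := by
    have hsmall : frobNorm (Ex * Eyᵀ) ≤ a * b := by
      calc frobNorm (Ex * Eyᵀ) ≤ specNorm Ex * frobNorm Eyᵀ := frob_mul_le_spec_frob _ _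
        _ ≤ a * b := by
            rw [frob_transpose]
            exact mul_le_mul_of_nonneg_right (spec_le_frob _) hb0
    calc F = frobNorm (Ex * Ytᵀ + Xt * Eyᵀ + -(Ex * Eyᵀ)) := by rw [hF_def, hE]
      _ ≤ frobNorm (Ex * Ytᵀ + Xt * Eyᵀ) + frobNorm (-(Ex * Eyᵀ)) := frob_add_le _ _
      _ ≤ (T1 + T2) + frobNorm (Ex * Eyᵀ) := by
          rw [frob_neg]
          exact add_le_add (frob_add_le _ _) le_rfl
      _ ≤ T1 + T2 + a * b := add_le_add le_rfl hsmall
  -- bounds for the two main terms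
  have hL1 : frobNorm (E * (Yt * Λ)) ≤ 2 * (F * (s + b)) := by
    calc frobNorm (E * (Yt * Λ)) = frobNorm ((E * Yt) * Λ) := by rw [Matrix.mul_assoc]
      _ ≤ frobNorm (E * Yt) * specNorm Λ := frob_mul_le_frob_spec _ _
      _ ≤ frobNorm (E * Yt) * 2 := mul_le_mul_of_nonneg_left hΛ2 (frob_nonneg _)
      _ ≤ (F * (s + b)) * 2 := by
          apply mul_le_mul_of_nonneg_right _ (by norm_num)
          calc frobNorm (E * Yt) ≤ F * specNorm Yt := frob_mul_le_frob_spec _ _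
            _ ≤ F * (s + b) := mul_le_mul_of_nonneg_left specYt hF0
      _ = 2 * (F * (s + b)) := by ring
  have hL2 : frobNorm (Eᵀ * (Xt * Λ⁻¹)) ≤ 2 * (F * (s + a)) := by
    calc frobNorm (Eᵀ * (Xt * Λ⁻¹)) = frobNorm ((Eᵀ * Xt) * Λ⁻¹) := by rw [Matrix.mul_assoc]
      _ ≤ frobNorm (Eᵀ * Xt) * specNorm Λ⁻¹ := frob_mul_le_frob_spec _ _
      _ ≤ frobNorm (Eᵀ * Xt) * 2 := mul_le_mul_of_nonneg_left hΛi2 (frob_nonneg _)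
      _ ≤ (F * (s + a)) * 2 := by
          apply mul_le_mul_of_nonneg_right _ (by norm_num)
          calc frobNorm (Eᵀ * Xt) ≤ frobNorm Eᵀ * specNorm Xt := frob_mul_le_frob_spec _ _
            _ = F * specNorm Xt := by rw [frob_transpose]
            _ ≤ F * (s + a) := mul_le_mul_of_nonneg_left specXt hF0
      _ = 2 * (F * (s + a)) := by ring
  set L1 := frobNorm (E * (Yt * Λ)) with hL1_def
  set L2 := frobNorm (Eᵀ * (Xt * Λ⁻¹)) with hL2_def
  have hL10 : 0 ≤ L1 := frob_nonneg _
  have hL20 : 0 ≤ L2 := frob_nonneg _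
  -- numeric combination
  have hmulq : σmax * σmin / K = σmax * q := by rw [hq_def]; ring
  rw [hmulq]
  exact numeric_main σmax q s a b F T1 T2 L1 L2 hσmax_pos hq0 hqσ hs2 hs0 ha0 hb0 hF0
    hT10 hT20 hL10 hL20 hq hF hL1 hL2
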